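/- arXiv:2312.01391 — 2 statements merged into one kernel-verified Lean document; each statement's English description precedes it below -/
import Mathlib

section
/- For every integer d ≥ 1, integers k ≥ 1 and z ≥ 0, and every finite set P ⊆ ℝ^d, there exists a subset P' ⊆ P with |P'| ≤ (k+1)·(z+1) such that (1/3)·OPT_{k,z}(P) ≤ OPT_{k,z}(P') ≤ OPT_{k,z}(P). -/
open MeasureTheory ProbabilityTheory

/-- The distribution of a `t × d` random matrix with iid standard Gaussian `N(0,1)` entries. -/
noncomputable def gaussianMatrix (t d : ℕ) : Measure (Fin t → Fin d → ℝ) :=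
  Measure.pi fun _ => Measure.pi fun _ => gaussianReal 0 1

/-- Applying a `t × d` matrix to a vector in `ℝ^d`, yielding a vector in `ℝ^t`. -/
noncomputable def matVec {t d : ℕ} (G : Fin t → Fin d → ℝ)
    (x : EuclideanSpace ℝ (Fin d)) : EuclideanSpace ℝ (Fin t) :=
  WithLp.toLp 2 (fun i => ∑ j, G i j * x j)

/-- `OPT_{k,z}(P)`: the k-center-with-z-outliers value of `P`, i.e. the infimum over all
finite `C ⊆ ℝ^d` with `|C| = k` and all `Z ⊆ P` with `|Z| ≤ z` of
`max_{p ∈ P∖Z} dist(p, C)`. -/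
noncomputable def koutVal (d k z : ℕ) (P : Set (EuclideanSpace ℝ (Fin d))) : ℝ :=
  sInf { r | ∃ C : Finset (EuclideanSpace ℝ (Fin d)), C.card = k ∧
    ∃ Z : Finset (EuclideanSpace ℝ (Fin d)), ↑Z ⊆ P ∧ Z.card ≤ z ∧
      r = sSup ((fun p => Metric.infDist p (↑C : Set (EuclideanSpace ℝ (Fin d)))) ''
            (P \ ↑Z)) }

open Metric

/-- Gonzalez farthest-point traversal existence lemma. -/
lemma gonzalez {E : Type*} [MetricSpace E] (Pc : Finset E) :
    ∀ m : ℕ, 1 ≤ m → m ≤ Pc.card →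
    ∃ L : Finset E, L ⊆ Pc ∧ L.card = m ∧ ∃ δ : ℝ, 0 ≤ δ ∧
      (∀ a ∈ L, ∀ b ∈ L, a ≠ b → δ ≤ dist a b) ∧
      (∀ p ∈ Pc, ∃ q ∈ L, dist p q ≤ δ) := by
  classical
  intro m
  induction m with
  | zero => omega
  | succ m ih =>
    intro _ hcard
    rcases Nat.eq_zero_or_pos m with hm | hm
    · subst hm
      have hx : ∃ x, x ∈ Pc := Finset.card_pos.mp (by omega)
      obtain ⟨x, hx⟩ := hx
      refine ⟨{x}, by simpa using hx, by simp,
        Pc.sup' ⟨x, hx⟩ (fun p => dist p x), ?_, ?_, ?_⟩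
      · have h0 := Finset.le_sup' (f := fun p => dist p x) hx
        simpa using h0
      · intro a ha b hb hab
        simp only [Finset.mem_singleton] at ha hb
        exact absurd (ha.trans hb.symm) hab
      · intro p hp
        exact ⟨x, Finset.mem_singleton_self x, Finset.le_sup' (fun p => dist p x) hp⟩
    · obtain ⟨L, hLP, hLcard, δ, hδ0, hsep, hcov⟩ := ih hm (by omega)
      have hLne : L.Nonempty := Finset.card_pos.mp (by omega)
      have hPCne : Pc.Nonempty := Finset.card_pos.mp (by omega)
      obtain ⟨f, hfP, hfmax⟩ :=
        Pc.exists_max_image (fun p => infDist p (↑L : Set E)) hPCne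
      have hPLne : (Pc \ L).Nonempty := by
        rw [← Finset.card_pos, Finset.card_sdiff_of_subset hLP]; omega
      obtain ⟨y, hy⟩ := hPLne
      rw [Finset.mem_sdiff] at hy
      have hLclosed : IsClosed (↑L : Set E) := L.finite_toSet.isClosed
      have hLsetne : (↑L : Set E).Nonempty := by exact_mod_cast hLne
      have hypos : 0 < infDist y (↑L : Set E) := by
        rcases lt_or_eq_of_le (infDist_nonneg (x := y) (s := (↑L : Set E))) with h | h
        · exact h
        · exfalso
          exact hy.2 (by exact_mod_cast (hLclosed.mem_iff_infDist_zero hLsetne).mpr h.symm)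
      have hδ'pos : 0 < infDist f (↑L : Set E) := lt_of_lt_of_le hypos (hfmax y hy.1)
      have hfL : f ∉ L := by
        intro hfL
        rw [infDist_zero_of_mem (by exact_mod_cast hfL)] at hδ'pos
        exact lt_irrefl _ hδ'pos
      set δ' : ℝ := infDist f (↑L : Set E) with hδ'
      have hδ'δ : δ' ≤ δ := by
        obtain ⟨q, hq, hdq⟩ := hcov f hfP
        exact le_trans (infDist_le_dist_of_mem (by exact_mod_cast hq)) hdq
      refine ⟨insert f L, Finset.insert_subset hfP hLP,
        by rw [Finset.card_insert_of_notMem hfL, hLcard], δ', le_of_lt hδ'pos, ?_, ?_⟩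
      · intro a ha b hb hab
        rw [Finset.mem_insert] at ha hb
        rcases ha with ha | ha <;> rcases hb with hb | hb
        · exact absurd (ha.trans hb.symm) hab
        · subst ha
          exact infDist_le_dist_of_mem (by exact_mod_cast hb)
        · subst hb
          rw [dist_comm]
          exact infDist_le_dist_of_mem (by exact_mod_cast ha)
        · exact le_trans hδ'δ (hsep a ha b hb hab)
      · intro p hp
        obtain ⟨q, hq, hdq⟩ :=
          (L.finite_toSet.isCompact).exists_infDist_eq_dist hLsetne p
        refine ⟨q, Finset.mem_insert_of_mem (by exact_mod_cast hq), ?_⟩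
        rw [← hdq]
        exact hfmax p hp

/-- Iterated layered Gonzalez construction. -/
lemma layers {E : Type*} [MetricSpace E] (k : ℕ) :
    ∀ (n : ℕ) (Pc : Finset E), n * (k+1) ≤ Pc.card →
    ∃ (Ls : Fin n → Finset E) (δs : Fin n → ℝ),
      (∀ j, Ls j ⊆ Pc) ∧ (∀ j, (Ls j).card = k+1) ∧ (∀ j, 0 ≤ δs j) ∧
      (∀ j, ∀ a ∈ Ls j, ∀ b ∈ Ls j, a ≠ b → δs j ≤ dist a b) ∧
      (∀ i j, i ≠ j → Disjoint (Ls i) (Ls j)) ∧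
      (∀ p ∈ Pc, (∃ j, p ∈ Ls j) ∨ (∀ j, ∃ q ∈ Ls j, dist p q ≤ δs j)) := by
  classical
  intro n
  induction n with
  | zero =>
    intro Pc _
    exact ⟨Fin.elim0, Fin.elim0, fun j => j.elim0, fun j => j.elim0, fun j => j.elim0,
      fun j => j.elim0, fun i => i.elim0, fun p _ => Or.inr (fun j => j.elim0)⟩
  | succ n ih =>
    intro Pc hcard
    have hmul : (n+1) * (k+1) = n*(k+1) + (k+1) := by ring
    obtain ⟨L, hLP, hLcard, δ, hδ0, hsep, hcov⟩ := gonzalez Pc (k+1) (by omega) (by omega)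
    have hsd : n * (k+1) ≤ (Pc \ L).card := by
      rw [Finset.card_sdiff_of_subset hLP]; omega
    obtain ⟨Ls', δs', hsub', hcard', hδ0', hsep', hdisj', hcov'⟩ := ih (Pc \ L) hsd
    refine ⟨Fin.cons L Ls', Fin.cons δ δs', ?_, ?_, ?_, ?_, ?_, ?_⟩
    · intro j
      refine Fin.cases ?_ ?_ j
      · simpa using hLP
      · intro i
        simp only [Fin.cons_succ]
        exact (hsub' i).trans (Finset.sdiff_subset)
    · intro j
      refine Fin.cases ?_ ?_ j
      · simpa using hLcard
      · intro i; simpa using hcard' i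
    · intro j
      refine Fin.cases ?_ ?_ j
      · simpa using hδ0
      · intro i; simpa using hδ0' i
    · intro j
      refine Fin.cases ?_ ?_ j
      · simpa using hsep
      · intro i; simpa using hsep' i
    · have hdLL' : ∀ i, Disjoint L (Ls' i) := by
        intro i
        rw [Finset.disjoint_left]
        intro a haL haL'
        have := hsub' i haL'
        rw [Finset.mem_sdiff] at this
        exact this.2 haL
      intro i j hij
      rcases Fin.eq_zero_or_eq_succ i with rfl | ⟨i', rfl⟩ <;>
        rcases Fin.eq_zero_or_eq_succ j with rfl | ⟨j', rfl⟩
      · exact absurd rfl hij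
      · simpa only [Fin.cons_zero, Fin.cons_succ] using hdLL' j'
      · simpa only [Fin.cons_zero, Fin.cons_succ] using (hdLL' i').symm
      · simp only [Fin.cons_succ]
        exact hdisj' i' j' (fun h => hij (by rw [h]))
    · intro p hp
      by_cases hpL : p ∈ L
      · exact Or.inl ⟨0, by simpa using hpL⟩
      · have hp' : p ∈ Pc \ L := Finset.mem_sdiff.mpr ⟨hp, hpL⟩
        rcases hcov' p hp' with ⟨j, hj⟩ | h
        · exact Or.inl ⟨j.succ, by simpa using hj⟩
        · refine Or.inr ?_
          intro j
          refine Fin.cases ?_ ?_ j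
          · simpa using hcov p hp
          · intro i; simpa using h i

section KOut

/-- The candidate set whose infimum is `koutVal`. -/
def koutSet (d k z : ℕ) (P : Set (EuclideanSpace ℝ (Fin d))) : Set ℝ :=
  { r | ∃ C : Finset (EuclideanSpace ℝ (Fin d)), C.card = k ∧
    ∃ Z : Finset (EuclideanSpace ℝ (Fin d)), ↑Z ⊆ P ∧ Z.card ≤ z ∧
      r = sSup ((fun p => Metric.infDist p (↑C : Set (EuclideanSpace ℝ (Fin d)))) ''
            (P \ ↑Z)) }

lemma koutVal_eq (d k z : ℕ) (P : Set (EuclideanSpace ℝ (Fin d))) :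
    koutVal d k z P = sInf (koutSet d k z P) := rfl

lemma koutSet_nonneg (d k z : ℕ) (P : Set (EuclideanSpace ℝ (Fin d))) :
    ∀ r ∈ koutSet d k z P, 0 ≤ r := by
  rintro r ⟨C, hC, Z, hZ, hZc, rfl⟩
  exact Real.sSup_nonneg (by rintro x ⟨p, hp, rfl⟩; exact infDist_nonneg)

lemma koutSet_bddBelow (d k z : ℕ) (P : Set (EuclideanSpace ℝ (Fin d))) :
    BddBelow (koutSet d k z P) :=
  ⟨0, fun r hr => koutSet_nonneg d k z P r hr⟩

lemma koutVal_nonneg (d k z : ℕ) (P : Set (EuclideanSpace ℝ (Fin d))) :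
    0 ≤ koutVal d k z P :=
  Real.sInf_nonneg (koutSet_nonneg d k z P)

lemma infinite_euclidean (d : ℕ) (hd : 0 < d) : Infinite (EuclideanSpace ℝ (Fin d)) := by
  refine Infinite.of_injective
    (fun r : ℝ => ((WithLp.equiv 2 (Fin d → ℝ)).symm (fun _ => r))) ?_
  intro a b hab
  have h2 := congrArg (WithLp.equiv 2 (Fin d → ℝ)) hab
  simp only [Equiv.apply_symm_apply] at h2
  exact congrFun h2 ⟨0, hd⟩

lemma koutSet_nonempty (d k z : ℕ) (hd : 0 < d) (P : Set (EuclideanSpace ℝ (Fin d))) :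
    (koutSet d k z P).Nonempty := by
  haveI := infinite_euclidean d hd
  obtain ⟨C, -, hC⟩ :=
    Infinite.exists_superset_card_eq (∅ : Finset (EuclideanSpace ℝ (Fin d))) k (by simp)
  exact ⟨_, C, hC, ∅, by simp, by simp, rfl⟩

lemma koutVal_mono (d k z : ℕ) (hd : 0 < d) (P' P : Finset (EuclideanSpace ℝ (Fin d)))
    (h : P' ⊆ P) : koutVal d k z ↑P' ≤ koutVal d k z ↑P := by
  classical
  rw [koutVal_eq, koutVal_eq]
  refine le_csInf (koutSet_nonempty d k z hd ↑P) ?_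
  rintro b ⟨C, hC, Z, hZ, hZc, rfl⟩
  have hmem : sSup ((fun p => infDist p (↑C : Set (EuclideanSpace ℝ (Fin d)))) ''
      (↑P' \ ↑(Z ∩ P'))) ∈ koutSet d k z ↑P' := by
    refine ⟨C, hC, Z ∩ P', ?_, le_trans (Finset.card_le_card (Finset.inter_subset_left)) hZc, rfl⟩
    intro x hx
    simp only [Finset.coe_inter, Set.mem_inter_iff] at hx
    exact hx.2
  refine le_trans (csInf_le (koutSet_bddBelow d k z ↑P') hmem) ?_
  refine Real.sSup_le ?_ (Real.sSup_nonneg (by rintro x ⟨p, hp, rfl⟩; exact infDist_nonneg))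
  rintro x ⟨p, hp, rfl⟩
  have hpP : p ∈ (↑P : Set (EuclideanSpace ℝ (Fin d))) \ ↑Z := by
    constructor
    · exact h (by exact_mod_cast hp.1)
    · intro hpZ
      exact hp.2 (by
        simp only [Finset.coe_inter, Set.mem_inter_iff]
        exact ⟨hpZ, hp.1⟩)
  refine le_csSup ?_ ⟨p, hpP, rfl⟩
  exact (P.finite_toSet.subset Set.diff_subset).image _ |>.bddAbove

end KOut

/-- Witness for the outliers variant. For every `d, k ≥ 1`, `z ≥ 0`, and
finite `P ⊆ ℝ^d`, there is a subset `P' ⊆ P` of size at most `(k+1)(z+1)` with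
`(1/3)·OPT_{k,z}(P) ≤ OPT_{k,z}(P') ≤ OPT_{k,z}(P)`. -/
theorem witness_for_outliers_kcenter (d k z : ℕ) (hd : 0 < d) (hk : 0 < k)
    (P : Finset (EuclideanSpace ℝ (Fin d))) :
    ∃ P' : Finset (EuclideanSpace ℝ (Fin d)), P' ⊆ P ∧ P'.card ≤ (k + 1) * (z + 1) ∧
      (1 / 3 : ℝ) * koutVal d k z ↑P ≤ koutVal d k z ↑P' ∧
      koutVal d k z ↑P' ≤ koutVal d k z ↑P := by
  classical
  by_cases hsmall : P.card ≤ (k + 1) * (z + 1)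
  · refine ⟨P, Finset.Subset.refl P, hsmall, ?_, le_rfl⟩
    nlinarith [koutVal_nonneg d k z (↑P : Set (EuclideanSpace ℝ (Fin d)))]
  · push_neg at hsmall
    have hPcard : (z + 1) * (k + 1) ≤ P.card := by
      have : (k + 1) * (z + 1) = (z + 1) * (k + 1) := by ring
      omega
    obtain ⟨Ls, δs, hLsub, hLcard, hδ0, hsep, hdisj, hcov⟩ := layers k (z + 1) P hPcard
    set P' : Finset (EuclideanSpace ℝ (Fin d)) := Finset.univ.biUnion Ls with hP'def
    have hP'P : P' ⊆ P := by
      intro x hx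
      rw [hP'def, Finset.mem_biUnion] at hx
      obtain ⟨j, -, hj⟩ := hx
      exact hLsub j hj
    have hmemP' : ∀ (j : Fin (z + 1)) (q : EuclideanSpace ℝ (Fin d)), q ∈ Ls j → q ∈ P' := by
      intro j q hq
      rw [hP'def, Finset.mem_biUnion]
      exact ⟨j, Finset.mem_univ j, hq⟩
    have hP'card : P'.card ≤ (k + 1) * (z + 1) := by
      calc P'.card ≤ ∑ j, (Ls j).card := Finset.card_biUnion_le
        _ = (z + 1) * (k + 1) := by
            simp [hLcard, Finset.sum_const, Finset.card_univ, mul_comm]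
        _ = (k + 1) * (z + 1) := by ring
    refine ⟨P', hP'P, hP'card, ?_, koutVal_mono d k z hd P' P hP'P⟩
    rw [koutVal_eq d k z (↑P' : Set (EuclideanSpace ℝ (Fin d)))]
    refine le_csInf (koutSet_nonempty d k z hd _) ?_
    rintro b ⟨C, hCcard, Z', hZ'sub, hZ'card, rfl⟩
    set b := sSup ((fun p => infDist p (↑C : Set (EuclideanSpace ℝ (Fin d)))) ''
        (↑P' \ ↑Z')) with hbdef
    have hbdd : BddAbove ((fun p => infDist p (↑C : Set (EuclideanSpace ℝ (Fin d)))) ''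
        (↑P' \ ↑Z')) :=
      ((P'.finite_toSet.subset Set.diff_subset).image _).bddAbove
    have hZ'P' : Z' ⊆ P' := by exact_mod_cast hZ'sub
    -- basic facts about C
    have hCne : (↑C : Set (EuclideanSpace ℝ (Fin d))).Nonempty := by
      have : C.Nonempty := Finset.card_pos.mp (by omega)
      exact_mod_cast this
    -- a layer avoiding the outliers
    have hjstar : ∃ j, ∀ q ∈ Ls j, q ∉ Z' := by
      by_contra hcon
      push_neg at hcon
      choose g hg1 hg2 using hcon
      have hinj : Set.InjOn g ↑(Finset.univ : Finset (Fin (z + 1))) := by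
        intro i _ j _ hgij
        by_contra hij
        exact Finset.disjoint_left.mp (hdisj i j hij) (hg1 i) (hgij ▸ hg1 j)
      have hle := Finset.card_le_card_of_injOn g (fun a _ => hg2 a) hinj
      simp only [Finset.card_univ, Fintype.card_fin] at hle
      omega
    obtain ⟨j₀, hj₀⟩ := hjstar
    -- every point of the special layer is within `b` of `C`
    have hqb : ∀ q ∈ Ls j₀, infDist q (↑C : Set (EuclideanSpace ℝ (Fin d))) ≤ b := by
      intro q hq
      refine le_csSup hbdd ⟨q, ⟨?_, ?_⟩, rfl⟩
      · exact_mod_cast hmemP' j₀ q hq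
      · intro hqZ
        exact hj₀ q hq (by exact_mod_cast hqZ)
    have hb0 : 0 ≤ b := by
      have hLne : (Ls j₀).Nonempty := Finset.card_pos.mp (by rw [hLcard j₀]; omega)
      obtain ⟨q, hq⟩ := hLne
      exact le_trans infDist_nonneg (hqb q hq)
    -- pigeonhole: two points of the layer share a nearest center
    have hex : ∀ q : EuclideanSpace ℝ (Fin d), ∃ c : EuclideanSpace ℝ (Fin d),
        q ∈ Ls j₀ → c ∈ C ∧ dist q c ≤ b := by
      intro q
      by_cases hq : q ∈ Ls j₀
      · obtain ⟨c, hc, hce⟩ :=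
          (C.finite_toSet.isCompact).exists_infDist_eq_dist hCne q
        exact ⟨c, fun _ => ⟨by exact_mod_cast hc, by rw [← hce]; exact hqb q hq⟩⟩
      · exact ⟨Classical.choice (Finset.nonempty_coe_sort.mpr
          (Finset.card_pos.mp (by omega : 0 < C.card))) |>.1, fun h => absurd h hq⟩
    choose F hF using hex
    have hmaps : ∀ a ∈ Ls j₀, F a ∈ C := fun a ha => (hF a ha).1
    have hpig : ∃ x ∈ Ls j₀, ∃ y ∈ Ls j₀, x ≠ y ∧ F x = F y := by
      refine Finset.exists_ne_map_eq_of_card_lt_of_maps_to ?_ hmaps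
      rw [hCcard, hLcard j₀]; omega
    obtain ⟨a, ha, a', ha', haa', hFeq⟩ := hpig
    have hδb : δs j₀ ≤ b + b := by
      have h1 : dist a (F a) ≤ b := (hF a ha).2
      have h2 : dist a' (F a') ≤ b := (hF a' ha').2
      have h3 : δs j₀ ≤ dist a a' := hsep j₀ a ha a' ha' haa'
      have h4 : dist a a' ≤ dist a (F a) + dist a' (F a') := by
        rw [hFeq]
        calc dist a a' ≤ dist a (F a') + dist (F a') a' := dist_triangle _ _ _
          _ = dist a (F a') + dist a' (F a') := by rw [dist_comm (F a') a']
      linarith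
    -- build a candidate for P with the same centers and outliers
    have hvmem : sSup ((fun p => infDist p (↑C : Set (EuclideanSpace ℝ (Fin d)))) ''
        (↑P \ ↑Z')) ∈ koutSet d k z ↑P := by
      refine ⟨C, hCcard, Z', ?_, hZ'card, rfl⟩
      refine hZ'sub.trans ?_
      exact_mod_cast hP'P
    have h1 : koutVal d k z ↑P ≤ sSup ((fun p => infDist p
        (↑C : Set (EuclideanSpace ℝ (Fin d)))) '' (↑P \ ↑Z')) :=
      csInf_le (koutSet_bddBelow d k z ↑P) hvmem
    have h2 : sSup ((fun p => infDist p (↑C : Set (EuclideanSpace ℝ (Fin d)))) ''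
        (↑P \ ↑Z')) ≤ δs j₀ + b := by
      refine Real.sSup_le ?_ (by linarith [hδ0 j₀])
      rintro x ⟨p, hp, rfl⟩
      have hpP : p ∈ P := by exact_mod_cast hp.1
      rcases hcov p hpP with ⟨j, hpj⟩ | hcv
      · have : infDist p (↑C : Set (EuclideanSpace ℝ (Fin d))) ≤ b := by
          refine le_csSup hbdd ⟨p, ⟨?_, hp.2⟩, rfl⟩
          exact_mod_cast hmemP' j p hpj
        linarith [hδ0 j₀]
      · obtain ⟨q, hqL, hdpq⟩ := hcv j₀
        have hq1 : infDist q (↑C : Set (EuclideanSpace ℝ (Fin d))) ≤ b := hqb q hqL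
        have hq2 : infDist p (↑C : Set (EuclideanSpace ℝ (Fin d))) ≤
            infDist q (↑C : Set (EuclideanSpace ℝ (Fin d))) + dist p q :=
          infDist_le_infDist_add_dist
        linarith
    linarith
end

section
/- Let d, k be positive integers, α ≥ 1 a real number, and P ⊆ ℝ^d a finite nonempty set. Suppose s₁, …, s_{k+1} ∈ P are points such that for every i ∈ {2, …, k+1}, min_{1 ≤ j < i} ‖s_i − s_j‖ ≥ (1/α)·max_{p ∈ P} min_{1 ≤ j < i} ‖p − s_j‖ (i.e., each s_i is an α-approximate furthest point from {s₁, …, s_{i−1}} in P). Let D = min_{1 ≤ j < i ≤ k+1} ‖s_i − s_j‖. Then OPT_k(P) ≤ α·D ≤ 2α·OPT_k(P). -/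
set_option maxHeartbeats 1000000


/-- `max_{p ∈ P} dist(p, C)`, the k-center cost of a center set `C` for a pointset `P`. -/
noncomputable def kcost (d : ℕ) (P C : Set (EuclideanSpace ℝ (Fin d))) : ℝ :=
  sSup ((fun p => Metric.infDist p C) '' P)

/-- `OPT_k(P)`: the k-center value of `P`, i.e. the infimum over all finite `C ⊆ ℝ^d` with
`|C| = k` of `max_{p ∈ P} dist(p, C)`. -/
noncomputable def kcenter (d k : ℕ) (P : Set (EuclideanSpace ℝ (Fin d))) : ℝ :=
  sInf { r | ∃ C : Finset (EuclideanSpace ℝ (Fin d)), C.card = k ∧ r = kcost d P ↑C }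

/-- Relaxed Gonzalez. If `s 0, …, s k ∈ P` are such that each `s i`
(`i ≠ 0`) is an `α`-approximate furthest point in `P` from `{s 0, …, s (i-1)}`, and `D` is
the minimum pairwise distance among the `s i`, then `OPT_k(P) ≤ α·D ≤ 2α·OPT_k(P)`. -/
theorem relaxed_gonzalez (d k : ℕ) (hd : 0 < d) (hk : 0 < k)
    (α : ℝ) (hα : 1 ≤ α)
    (P : Finset (EuclideanSpace ℝ (Fin d))) (hP : P.Nonempty)
    (s : Fin (k + 1) → EuclideanSpace ℝ (Fin d)) (hsP : ∀ i, s i ∈ P)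
    (happrox : ∀ i : Fin (k + 1), i ≠ 0 →
      (1 / α) * sSup ((fun p => ⨅ j : {j : Fin (k + 1) // j < i}, ‖p - s j.val‖) ''
          (↑P : Set (EuclideanSpace ℝ (Fin d)))) ≤
        ⨅ j : {j : Fin (k + 1) // j < i}, ‖s i - s j.val‖)
    (D : ℝ)
    (hD : D = ⨅ q : {q : Fin (k + 1) × Fin (k + 1) // q.2 < q.1},
      ‖s q.val.1 - s q.val.2‖) :
    kcenter d k ↑P ≤ α * D ∧ α * D ≤ 2 * α * kcenter d k ↑P := by
  classical
  have hαpos : (0:ℝ) < α := lt_of_lt_of_le one_pos hα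
  haveI : Infinite (EuclideanSpace ℝ (Fin d)) := by
    refine Infinite.of_injective (fun x : ℝ => (WithLp.toLp 2 (fun _ => x) : EuclideanSpace ℝ (Fin d))) ?_
    intro x y hxy
    simpa using congrArg (fun v : EuclideanSpace ℝ (Fin d) => v ⟨0, hd⟩) hxy
  set g : Fin (k+1) → EuclideanSpace ℝ (Fin d) → ℝ :=
    fun i p => ⨅ j : {j : Fin (k+1) // j < i}, ‖p - s j.val‖ with hg
  have hbddA : ∀ f : EuclideanSpace ℝ (Fin d) → ℝ,
      BddAbove (f '' (↑P : Set (EuclideanSpace ℝ (Fin d)))) :=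
    fun f => (P.finite_toSet.image f).bddAbove
  have hbddB : ∀ (p : EuclideanSpace ℝ (Fin d)) (i : Fin (k+1)),
      BddBelow (Set.range fun j : {j : Fin (k+1) // j < i} => ‖p - s j.val‖) :=
    fun p i => ⟨0, by rintro x ⟨j, rfl⟩; exact norm_nonneg _⟩
  set L : Fin (k+1) := Fin.last k with hL
  have hLne : L ≠ 0 := by
    simp only [hL, Ne, Fin.ext_iff, Fin.val_last, Fin.val_zero]
    omega
  have hLpos : (0 : Fin (k+1)) < L := Fin.pos_of_ne_zero hLne
  haveI hneL : Nonempty {j : Fin (k+1) // j < L} := ⟨⟨0, hLpos⟩⟩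
  -- monotonicity: g L ≤ g i pointwise, for i ≠ 0
  have hgmono : ∀ i : Fin (k+1), i ≠ 0 → ∀ p, g L p ≤ g i p := by
    intro i hi p
    haveI : Nonempty {j : Fin (k+1) // j < i} := ⟨⟨0, Fin.pos_of_ne_zero hi⟩⟩
    refine le_ciInf fun j => ?_
    exact ciInf_le (hbddB p L) ⟨j.val, lt_of_lt_of_le j.prop (Fin.le_last i)⟩
  have himg : ∀ i : Fin (k+1),
      (g i '' (↑P : Set (EuclideanSpace ℝ (Fin d)))).Nonempty :=
    fun i => ⟨g i hP.choose, ⟨hP.choose, hP.choose_spec, rfl⟩⟩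
  have hrmono : ∀ i : Fin (k+1), i ≠ 0 →
      sSup (g L '' (↑P : Set (EuclideanSpace ℝ (Fin d)))) ≤
        sSup (g i '' (↑P : Set (EuclideanSpace ℝ (Fin d)))) := by
    intro i hi
    refine csSup_le (himg L) ?_
    rintro x ⟨p, hp, rfl⟩
    exact le_trans (hgmono i hi p) (le_csSup (hbddA _) ⟨p, hp, rfl⟩)
  set rL : ℝ := sSup (g L '' (↑P : Set (EuclideanSpace ℝ (Fin d)))) with hrL
  -- key: rL ≤ α * D
  have hkey : rL ≤ α * D := by
    have hlow : (1/α) * rL ≤ D := by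
      rw [hD]
      haveI : Nonempty {q : Fin (k+1) × Fin (k+1) // q.2 < q.1} := ⟨⟨(L, 0), hLpos⟩⟩
      refine le_ciInf fun q => ?_
      obtain ⟨⟨i, j⟩, hji⟩ := q
      have hi0 : i ≠ 0 := Fin.pos_iff_ne_zero.mp (lt_of_le_of_lt (Fin.zero_le j) hji)
      have h1 : (1/α) * rL ≤ (1/α) * sSup (g i '' (↑P : Set (EuclideanSpace ℝ (Fin d)))) :=
        mul_le_mul_of_nonneg_left (hrmono i hi0) (by positivity)
      have h2 := happrox i hi0
      have h3 : g i (s i) ≤ ‖s i - s j‖ := ciInf_le (hbddB (s i) i) ⟨j, hji⟩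
      exact le_trans h1 (le_trans h2 h3)
    have := mul_le_mul_of_nonneg_left hlow hαpos.le
    calc rL = α * ((1/α) * rL) := by field_simp
    _ ≤ α * D := this
  -- the center set: s j for j < L, padded to cardinality k
  set C0 : Finset (EuclideanSpace ℝ (Fin d)) :=
    Finset.image (fun j : Fin k => s j.castSucc) Finset.univ with hC0
  have hC0card : C0.card ≤ k := le_trans Finset.card_image_le (by simp)
  obtain ⟨C, hC0C, hCcard⟩ := Infinite.exists_superset_card_eq C0 k hC0card
  have hmemC : ∀ j : Fin (k+1), j < L → s j ∈ C := by
    intro j hj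
    have hjne : j ≠ Fin.last k := Fin.lt_last_iff_ne_last.mp hj
    refine hC0C ?_
    refine Finset.mem_image.mpr ⟨j.castPred hjne, Finset.mem_univ _, ?_⟩
    rw [Fin.castSucc_castPred]
  -- lower bound 0 for the kcenter set
  have hkcost_nonneg : ∀ C' : Finset (EuclideanSpace ℝ (Fin d)),
      0 ≤ kcost d ↑P ↑C' := by
    intro C'
    obtain ⟨p, hp⟩ := hP
    exact le_trans Metric.infDist_nonneg (le_csSup (hbddA _) ⟨p, hp, rfl⟩)
  have hSlb : ∀ x ∈ { r | ∃ C' : Finset (EuclideanSpace ℝ (Fin d)),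
      C'.card = k ∧ r = kcost d ↑P ↑C' }, (0:ℝ) ≤ x := by
    rintro x ⟨C', _, rfl⟩; exact hkcost_nonneg C'
  have hSne : { r | ∃ C' : Finset (EuclideanSpace ℝ (Fin d)),
      C'.card = k ∧ r = kcost d ↑P ↑C' }.Nonempty := ⟨kcost d ↑P ↑C, C, hCcard, rfl⟩
  -- kcenter ≤ kcost C ≤ rL
  have hkcostC : kcost d ↑P ↑C ≤ rL := by
    rw [kcost]
    refine csSup_le ⟨Metric.infDist hP.choose ↑C, ⟨hP.choose, hP.choose_spec, rfl⟩⟩ ?_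
    rintro x ⟨p, hp, rfl⟩
    have h1 : Metric.infDist p ↑C ≤ g L p := by
      refine le_ciInf fun j => ?_
      have := Metric.infDist_le_dist_of_mem (x := p) (Finset.mem_coe.mpr (hmemC j.val j.prop))
      rwa [dist_eq_norm] at this
    exact le_trans h1 (le_csSup (hbddA _) ⟨p, hp, rfl⟩)
  have hpart1 : kcenter d k ↑P ≤ α * D := by
    have h1 : kcenter d k ↑P ≤ kcost d ↑P ↑C :=
      csInf_le ⟨0, hSlb⟩ ⟨C, hCcard, rfl⟩
    exact le_trans h1 (le_trans hkcostC hkey)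
  -- part 2 : D ≤ 2 * kcenter
  have hpart2 : D ≤ 2 * kcenter d k ↑P := by
    have h2 : D / 2 ≤ kcenter d k ↑P := by
      refine le_csInf hSne ?_
      rintro x ⟨C', hC'card, rfl⟩
      have hC'ne : (↑C' : Set (EuclideanSpace ℝ (Fin d))).Nonempty := by
        have : C'.Nonempty := Finset.card_pos.mp (hC'card ▸ hk)
        exact ⟨this.choose, this.choose_spec⟩
      have hmin : ∀ i : Fin (k+1), ∃ c ∈ (↑C' : Set (EuclideanSpace ℝ (Fin d))),
          Metric.infDist (s i) ↑C' = dist (s i) c :=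
        fun i => C'.finite_toSet.isCompact.exists_infDist_eq_dist hC'ne (s i)
      choose c hcmem hceq using hmin
      have hdistb : ∀ i : Fin (k+1), dist (s i) (c i) ≤ kcost d ↑P ↑C' := by
        intro i
        rw [← hceq i]
        exact le_csSup (hbddA _) ⟨s i, hsP i, rfl⟩
      have hpigeon : ∃ i a : Fin (k+1), i ≠ a ∧ c i = c a := by
        have hcard : C'.card < (Finset.univ : Finset (Fin (k+1))).card := by
          simp [hC'card]
        obtain ⟨i, _, a, _, hia, h⟩ :=
          Finset.exists_ne_map_eq_of_card_lt_of_maps_to hcard (fun i _ => hcmem i)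
        exact ⟨i, a, hia, h⟩
      obtain ⟨i, a, hia, hc⟩ := hpigeon
      have hDle : ∀ i a : Fin (k+1), a < i → D ≤ ‖s i - s a‖ := by
        intro i a h
        rw [hD]
        exact ciInf_le (f := fun q : {q : Fin (k + 1) × Fin (k + 1) // q.2 < q.1} =>
            ‖s q.val.1 - s q.val.2‖)
          ⟨0, by rintro x ⟨q, rfl⟩; exact norm_nonneg _⟩ ⟨(i, a), h⟩
      have hbound : D ≤ 2 * kcost d ↑P ↑C' := by
        have htri : ‖s i - s a‖ ≤ 2 * kcost d ↑P ↑C' := by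
          have : ‖s i - s a‖ = dist (s i) (s a) := (dist_eq_norm _ _).symm
          rw [this]
          calc dist (s i) (s a) ≤ dist (s i) (c i) + dist (c i) (s a) := dist_triangle _ _ _
          _ = dist (s i) (c i) + dist (s a) (c a) := by rw [hc, dist_comm (c a) (s a)]
          _ ≤ kcost d ↑P ↑C' + kcost d ↑P ↑C' := add_le_add (hdistb i) (hdistb a)
          _ = 2 * kcost d ↑P ↑C' := by ring
        rcases lt_or_gt_of_ne hia with h | h
        · have := hDle a i h
          calc D ≤ ‖s a - s i‖ := this
          _ = ‖s i - s a‖ := by rw [norm_sub_rev]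
          _ ≤ _ := htri
        · exact le_trans (hDle i a h) htri
      linarith
    linarith
  refine ⟨hpart1, ?_⟩
  have := mul_le_mul_of_nonneg_left hpart2 hαpos.le
  calc α * D ≤ α * (2 * kcenter d k ↑P) := this
  _ = 2 * α * kcenter d k ↑P := by ring
end
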